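/- A partition λ with Frobenius partition 𝔉(λ) = (a_1,...,a_s; b_1,...,b_s) is a t-core (no hook length divisible by t) if and only if: (1) a_i + b_j + 1 ≢ 0 (mod t) for all i,j; (2) whenever a_i ≥ t, the value a_i − t also appears among the a's; and (3) whenever b_j ≥ t, the value b_j − t also appears among the b's. -/
import Mathlib


open Filter

/-- A partition represented as a weakly decreasing, eventually zero sequence of parts
(0-indexed: `f i` is the (i+1)-st part). -/
def IsPartition (f : ℕ → ℕ) : Prop :=
  Antitone f ∧ ∀ᶠ i in atTop, f i = 0

/-- The size `|λ|` of a partition. -/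
noncomputable def psize (f : ℕ → ℕ) : ℕ := ∑' i, f i

/-- The conjugate partition: `conj f j` is the number of parts of `f` exceeding `j`,
i.e. the (j+1)-st column length. -/
noncomputable def conj (f : ℕ → ℕ) : ℕ → ℕ := fun j => Nat.card {i : ℕ // j < f i}

/-- The Durfee square size: the number of indices `i` with `λ_{i+1} ≥ i+1`. -/
noncomputable def durfee (f : ℕ → ℕ) : ℕ := Nat.card {i : ℕ // i < f i}

/-- Top Frobenius entry `a_{i+1} = λ_{i+1} - (i+1)` (0-indexed). -/
noncomputable def frobA (f : ℕ → ℕ) (i : ℕ) : ℕ := f i - (i + 1)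

/-- Bottom Frobenius entry `b_{i+1} = λ'_{i+1} - (i+1)` (0-indexed). -/
noncomputable def frobB (f : ℕ → ℕ) (i : ℕ) : ℕ := conj f i - (i + 1)

/-- Hook length of the (0-indexed) box `(i,j)` (valid when `j < f i`):
`h = (λ_i - j) + (λ'_j - i) - 1` in 1-indexed terms, which equals
`(λ_i - i) + (λ'_j - j) + 1`. -/
noncomputable def hook (f : ℕ → ℕ) (i j : ℕ) : ℕ :=
  (f i - (j + 1)) + (conj f j - (i + 1)) + 1

/-- A `t`-core partition: no hook length divisible by `t`. -/
def IsTCore (t : ℕ) (f : ℕ → ℕ) : Prop :=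
  IsPartition f ∧ ∀ i j, j < f i → ¬ t ∣ hook f i j

private lemma lower_card {S : Set ℕ} (hS : ∀ ⦃i j : ℕ⦄, i ≤ j → j ∈ S → i ∈ S)
    {m : ℕ} (hm : m ∉ S) (i : ℕ) : i ∈ S ↔ i < Nat.card S := by
  have hne : (Sᶜ).Nonempty := ⟨m, hm⟩
  have hmem : sInf Sᶜ ∈ Sᶜ := Nat.sInf_mem hne
  have hEq : S = Set.Iio (sInf Sᶜ) := by
    ext x
    simp only [Set.mem_Iio]
    constructor
    · intro hx
      by_contra h
      push_neg at h
      exact hmem (hS h hx)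
    · intro hx
      by_contra h
      have := Nat.sInf_le (show x ∈ Sᶜ from h)
      omega
  rw [hEq]
  have hc : Nat.card (Set.Iio (sInf Sᶜ)) = sInf Sᶜ := by
    simp [Nat.card_eq_card_toFinset]
  rw [hc]
  exact Set.mem_Iio

/-- A partition is a `t`-core iff (1) no `a_i + b_j + 1` is divisible by `t`,
(2) whenever `a_i ≥ t`, the value `a_i - t` also occurs in the top row, and
(3) whenever `b_j ≥ t`, the value `b_j - t` also occurs in the bottom row. -/
theorem stmt3 (t : ℕ) (ht : 0 < t) (f : ℕ → ℕ) (hf : IsPartition f) :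
    IsTCore t f ↔
      ((∀ i j, i < durfee f → j < durfee f → ¬ t ∣ (frobA f i + frobB f j + 1)) ∧
       (∀ i, i < durfee f → t ≤ frobA f i →
          ∃ k, k < durfee f ∧ frobA f k = frobA f i - t) ∧
       (∀ j, j < durfee f → t ≤ frobB f j →
          ∃ k, k < durfee f ∧ frobB f k = frobB f j - t)) := by
  obtain ⟨hmono, hev⟩ := hf
  obtain ⟨n, hn⟩ := eventually_atTop.mp hev
  -- Galois connection between a partition and its conjugate
  have hgalois : ∀ i j : ℕ, i < conj f j ↔ j < f i := by
    intro i j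
    have h := lower_card (S := {k | j < f k})
      (fun a b hab hb => by
        simp only [Set.mem_setOf_eq] at *
        have := hmono hab
        omega)
      (m := n) (by simp [Set.mem_setOf_eq, hn n le_rfl]) i
    simp only [Set.mem_setOf_eq] at h
    exact h.symm
  have hdurf : ∀ i : ℕ, i < durfee f ↔ i < f i := by
    intro i
    have h := lower_card (S := {k | k < f k})
      (fun a b hab hb => by
        simp only [Set.mem_setOf_eq] at *
        have := hmono hab
        omega)
      (m := n) (by simp [Set.mem_setOf_eq, hn n le_rfl]) i
    simp only [Set.mem_setOf_eq] at h
    exact h.symm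
  have hcn : ∀ j, conj f j ≤ n := by
    intro j
    by_contra hh
    push_neg at hh
    have := (hgalois n j).mp hh
    rw [hn n le_rfl] at this
    omega
  have hdn : durfee f ≤ n := by
    by_contra hh
    push_neg at hh
    have := (hdurf n).mp hh
    rw [hn n le_rfl] at this
    omega
  have hconjanti : ∀ j, conj f (j + 1) ≤ conj f j := by
    intro j
    by_contra hh
    push_neg at hh
    have h1 := (hgalois (conj f j) (j + 1)).mp hh
    have h2 := (hgalois (conj f j) j).mpr (by omega)
    omega
  -- disjointness of the beta set and its "gap" set
  have hdisj : ∀ k j, k < n → f k + n - (k + 1) ≠ n + j - conj f j := by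
    intro k j hk heq
    have hc2 := hcn j
    by_cases hjf : j < f k
    · have := (hgalois k j).mpr hjf
      omega
    · push_neg at hjf
      have hck : conj f j ≤ k := by
        by_contra hh
        push_neg at hh
        have := (hgalois k j).mp hh
        omega
      omega
  -- coverage: anything not a beta number is a gap number
  have hcover : ∀ x, (∀ k, k < n → f k + n - (k + 1) ≠ x) → ∃ j, n + j - conj f j = x := by
    intro x hx
    have hne : ∃ j, x < n + j - conj f j := ⟨x + 1, by have := hcn (x + 1); omega⟩
    obtain ⟨J, hJspec, hJmin⟩ : ∃ J, (x < n + J - conj f J) ∧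
        ∀ j, j < J → ¬ (x < n + j - conj f j) :=
      ⟨Nat.find hne, Nat.find_spec hne, fun j hj => Nat.find_min hne hj⟩
    cases J with
    | zero =>
      have hc0 := hcn 0
      have hin : n - 1 - x < n := by omega
      have hfi : f (n - 1 - x) = 0 := by
        by_contra hh
        have h1 : 0 < f (n - 1 - x) := Nat.pos_of_ne_zero hh
        have := (hgalois (n - 1 - x) 0).mpr h1
        omega
      exact absurd (by omega : f (n - 1 - x) + n - (n - 1 - x + 1) = x) (hx _ hin)
    | succ j =>
      have hgj : ¬ (x < n + j - conj f j) := hJmin j (Nat.lt_succ_self j)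
      push_neg at hgj
      have hcj := hcn j
      have hcj1 := hcn (j + 1)
      have hmono' : conj f (j + 1) ≤ conj f j := hconjanti j
      rcases eq_or_lt_of_le hgj with heq | hlt
      · exact ⟨j, heq⟩
      · obtain ⟨r, hr1, hrx⟩ : ∃ r, 1 ≤ r ∧ x = (n + j - conj f j) + r :=
          ⟨x - (n + j - conj f j), by omega, by omega⟩
        have hrle : r + conj f (j + 1) ≤ conj f j := by omega
        have hfi1 : j < f (conj f j - r) := (hgalois _ j).mp (by omega)
        have hfi2 : f (conj f j - r) ≤ j + 1 := by
          by_contra hh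
          push_neg at hh
          have := (hgalois (conj f j - r) (j + 1)).mpr hh
          omega
        have hiltn : conj f j - r < n := by omega
        exact absurd (by omega : f (conj f j - r) + n - (conj f j - r + 1) = x) (hx _ hiltn)
  -- hook identity
  have hhid : ∀ i j, j < f i →
      i < n ∧ hook f i j + (n + j - conj f j) = f i + n - (i + 1) := by
    intro i j hj
    have hin : i < n := by
      by_contra hh
      push_neg at hh
      have := hn i hh
      omega
    have hc1 : i < conj f j := (hgalois i j).mpr hj
    have hc2 := hcn j
    refine ⟨hin, ?_⟩
    show (f i - (j + 1)) + (conj f j - (i + 1)) + 1 + (n + j - conj f j) = f i + n - (i + 1)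
    omega
  -- characterization of "not a beta number" below n via Frobenius bottom entries
  have hnotB : ∀ x, x < n →
      ((∀ k, k < n → f k + n - (k + 1) ≠ x) ↔
        ∃ j, j < durfee f ∧ conj f j - (j + 1) = n - 1 - x) := by
    intro x hx
    constructor
    · intro hB
      obtain ⟨j, hgj⟩ := hcover x hB
      have hc2 := hcn j
      have hjc : j < conj f j := by omega
      have hjd : j < durfee f := (hdurf j).mpr ((hgalois j j).mp hjc)
      exact ⟨j, hjd, by omega⟩
    · rintro ⟨j, hjd, hbj⟩ k hk heq
      have hjf : j < f j := (hdurf j).mp hjd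
      have hjc : j < conj f j := (hgalois j j).mpr hjf
      have hc2 := hcn j
      exact hdisj k j hk (by omega)
  constructor
  · rintro ⟨-, hhooks⟩
    -- t-core implies the beta set is closed under subtracting multiples of t
    have hCoreM : ∀ i h, i < n → 1 ≤ h → t ∣ h → h ≤ f i + n - (i + 1) →
        ∃ k, k < n ∧ f k + n - (k + 1) = f i + n - (i + 1) - h := by
      intro i h hi hh1 hdvd hle
      by_contra hno
      push_neg at hno
      obtain ⟨j, hgj⟩ := hcover (f i + n - (i + 1) - h) (fun k hk => hno k hk)
      have hcnj := hcn j
      have hjfi : j < f i := by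
        by_contra hjf
        push_neg at hjf
        have hci : conj f j ≤ i := by
          by_contra hh
          push_neg at hh
          have := (hgalois i j).mp hh
          omega
        omega
      obtain ⟨hin, hid⟩ := hhid i j hjfi
      have hhe : hook f i j = h := by omega
      exact hhooks i j hjfi (hhe ▸ hdvd)
    have hCore1 : ∀ i, i < n → t ≤ f i + n - (i + 1) →
        ∃ k, k < n ∧ f k + n - (k + 1) = f i + n - (i + 1) - t :=
      fun i hi hti => hCoreM i t hi ht (dvd_refl t) hti
    refine ⟨?_, ?_, ?_⟩
    · intro i j hid hjd hdvd
      have hfi : i + 1 ≤ f i := (hdurf i).mp hid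
      have hjfj : j + 1 ≤ f j := (hdurf j).mp hjd
      have hjc : j + 1 ≤ conj f j := (hgalois j j).mpr hjfj
      have hc2 := hcn j
      have hin : i < n := by omega
      have ea : frobA f i = f i - (i + 1) := rfl
      have eb : frobB f j = conj f j - (j + 1) := rfl
      have hh1 : 1 ≤ frobA f i + frobB f j + 1 := by omega
      have hle : frobA f i + frobB f j + 1 ≤ f i + n - (i + 1) := by omega
      obtain ⟨k, hk, hbk⟩ := hCoreM i (frobA f i + frobB f j + 1) hin hh1 hdvd hle
      have := (hnotB (n - 1 - (conj f j - (j + 1))) (by omega)).mpr ⟨j, hjd, by omega⟩ k hk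
      omega
    · intro i hid hta
      have hfi : i + 1 ≤ f i := (hdurf i).mp hid
      have hin : i < n := by omega
      have ea : frobA f i = f i - (i + 1) := rfl
      obtain ⟨k, hk, hbk⟩ := hCore1 i hin (by omega)
      have hkd : k + 1 ≤ f k := by
        by_contra hh
        push_neg at hh
        omega
      have eak : frobA f k = f k - (k + 1) := rfl
      exact ⟨k, (hdurf k).mpr hkd, by omega⟩
    · intro j hjd htb
      have hjfj : j + 1 ≤ f j := (hdurf j).mp hjd
      have hjc : j + 1 ≤ conj f j := (hgalois j j).mpr hjfj
      have hc2 := hcn j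
      have hjn : j < n := by omega
      have eb : frobB f j = conj f j - (j + 1) := rfl
      have hy : ∀ k, k < n → f k + n - (k + 1) ≠ (n - 1 - (conj f j - (j + 1))) + t := by
        intro k hk heq
        obtain ⟨l, hl, hbl⟩ := hCore1 k hk (by omega)
        have hnB := (hnotB (n - 1 - (conj f j - (j + 1))) (by omega)).mpr ⟨j, hjd, by omega⟩ l hl
        omega
      obtain ⟨k, hkd, hbk⟩ := (hnotB ((n - 1 - (conj f j - (j + 1))) + t) (by omega)).mp hy
      have ebk : frobB f k = conj f k - (k + 1) := rfl
      exact ⟨k, hkd, by omega⟩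
  · rintro ⟨h1, h2, h3⟩
    refine ⟨⟨hmono, hev⟩, ?_⟩
    have hCore1 : ∀ i, i < n → t ≤ f i + n - (i + 1) →
        ∃ k, k < n ∧ f k + n - (k + 1) = f i + n - (i + 1) - t := by
      intro i hin hti
      by_cases hid : i < durfee f
      · have hfi : i + 1 ≤ f i := (hdurf i).mp hid
        have ea : frobA f i = f i - (i + 1) := rfl
        by_cases hta : t ≤ f i - (i + 1)
        · obtain ⟨k, hkd, hak⟩ := h2 i hid (by omega)
          have hfk : k + 1 ≤ f k := (hdurf k).mp hkd
          have eak : frobA f k = f k - (k + 1) := rfl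
          exact ⟨k, by omega, by omega⟩
        · push_neg at hta
          by_contra hno
          push_neg at hno
          obtain ⟨j, hjd, hbj⟩ :=
            (hnotB (f i + n - (i + 1) - t) (by omega)).mp (fun k hk => hno k hk)
          have hjfj : j + 1 ≤ f j := (hdurf j).mp hjd
          have hjc : j + 1 ≤ conj f j := (hgalois j j).mpr hjfj
          have hc2 := hcn j
          have ebj : frobB f j = conj f j - (j + 1) := rfl
          exact absurd (⟨1, by omega⟩ : t ∣ (frobA f i + frobB f j + 1)) (h1 i j hid hjd)
      · push_neg at hid
        have hfi : f i ≤ i := by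
          by_contra hh
          push_neg at hh
          have := (hdurf i).mpr hh
          omega
        by_contra hno
        push_neg at hno
        obtain ⟨j, hjd, hbj⟩ :=
          (hnotB (f i + n - (i + 1) - t) (by omega)).mp (fun k hk => hno k hk)
        have hjc : j + 1 ≤ conj f j := (hgalois j j).mpr ((hdurf j).mp hjd)
        have hc2 := hcn j
        have ebj : frobB f j = conj f j - (j + 1) := rfl
        obtain ⟨k, hkd, hbk⟩ := h3 j hjd (by omega)
        have hkc : k + 1 ≤ conj f k := (hgalois k k).mpr ((hdurf k).mp hkd)
        have hck2 := hcn k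
        have ebk : frobB f k = conj f k - (k + 1) := rfl
        have := (hnotB (f i + n - (i + 1)) (by omega)).mpr ⟨k, hkd, by omega⟩ i hin
        omega
    have hCoreM : ∀ h, 1 ≤ h → t ∣ h → ∀ i, i < n → h ≤ f i + n - (i + 1) →
        ∃ k, k < n ∧ f k + n - (k + 1) = f i + n - (i + 1) - h := by
      intro h
      induction h using Nat.strong_induction_on with
      | _ h IH =>
        intro hh1 hdvd i hin hle
        have hth : t ≤ h := Nat.le_of_dvd hh1 hdvd
        rcases eq_or_lt_of_le hth with heq | hlt
        · obtain ⟨k, hk, hbk⟩ := hCore1 i hin (by omega)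
          exact ⟨k, hk, by omega⟩
        · obtain ⟨k, hk, hbk⟩ := hCore1 i hin (by omega)
          have hdvd' : t ∣ h - t := Nat.dvd_sub hdvd dvd_rfl
          obtain ⟨l, hl, hbl⟩ := IH (h - t) (by omega) (by omega) hdvd' k hk (by omega)
          exact ⟨l, hl, by omega⟩
    intro i j hj hdvd
    obtain ⟨hin, hid⟩ := hhid i j hj
    have hc2 := hcn j
    have hhk1 : 1 ≤ hook f i j := by
      show 1 ≤ (f i - (j + 1)) + (conj f j - (i + 1)) + 1
      omega
    have hle : hook f i j ≤ f i + n - (i + 1) := by omega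
    obtain ⟨k, hk, hbk⟩ := hCoreM (hook f i j) hhk1 hdvd i hin hle
    exact hdisj k j hk (by omega)
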